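/- arXiv:2011.06374 — 3 statements merged into one kernel-verified Lean document; each statement's English description precedes it below -/
import Mathlib

section
/- Under the DCSBM population setup, the regularized population Laplacian factorizes as 𝓛_δ = ‖θ̃‖² · Γ̃ (D̃ P̃ D̃) Γ̃ᵀ. -/
open Matrix BigOperators MeasureTheory ProbabilityTheory

noncomputable section

namespace DCSBM

variable {n K : ℕ}

/-- The `n × K` membership matrix `Z` with `Z i k = 1` iff node `i` is in community `k`. -/
def Zmat (g : Fin n → Fin K) : Matrix (Fin n) (Fin K) ℝ :=
  Matrix.of fun i k => if g i = k then (1 : ℝ) else 0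

/-- The population expectation matrix `Ω = Θ Z P Zᵀ Θ`. -/
def Omega (g : Fin n → Fin K) (θ : Fin n → ℝ) (P : Matrix (Fin K) (Fin K) ℝ) :
    Matrix (Fin n) (Fin n) ℝ :=
  Matrix.diagonal θ * Zmat g * P * (Zmat g)ᵀ * Matrix.diagonal θ

/-- Expected degrees `𝒟_ii = ∑_j Ω_ij`. -/
def Dvec (g : Fin n → Fin K) (θ : Fin n → ℝ) (P : Matrix (Fin K) (Fin K) ℝ) : Fin n → ℝ :=
  fun i => ∑ j, Omega g θ P i j

/-- The regularized population Laplacian `𝓛_δ = 𝒟_δ^{-1/2} Ω 𝒟_δ^{-1/2}`. -/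
def Ldelta (g : Fin n → Fin K) (θ : Fin n → ℝ) (P : Matrix (Fin K) (Fin K) ℝ) (δ d : ℝ) :
    Matrix (Fin n) (Fin n) ℝ :=
  Matrix.diagonal (fun i => (Real.sqrt (Dvec g θ P i + δ * d))⁻¹) * Omega g θ P *
    Matrix.diagonal (fun i => (Real.sqrt (Dvec g θ P i + δ * d))⁻¹)

/-- `θ^δ_i = θ_i 𝒟_ii / (𝒟_ii + δ d)`. -/
def thetaDelta (g : Fin n → Fin K) (θ : Fin n → ℝ) (P : Matrix (Fin K) (Fin K) ℝ) (δ d : ℝ) :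
    Fin n → ℝ :=
  fun i => θ i * Dvec g θ P i / (Dvec g θ P i + δ * d)

/-- `θ̃_i = √(θ^δ_i)`. -/
def thetaTilde (g : Fin n → Fin K) (θ : Fin n → ℝ) (P : Matrix (Fin K) (Fin K) ℝ) (δ d : ℝ) :
    Fin n → ℝ :=
  fun i => Real.sqrt (thetaDelta g θ P δ d i)

/-- `θ̃^{(k)}_i = θ̃_i · 1{g i = k}`. -/
def thetaTildeK (g : Fin n → Fin K) (θ : Fin n → ℝ) (P : Matrix (Fin K) (Fin K) ℝ) (δ d : ℝ)
    (k : Fin K) : Fin n → ℝ :=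
  fun i => if g i = k then thetaTilde g θ P δ d i else 0

/-- Euclidean norm of a vector. -/
def normE {m : ℕ} (v : Fin m → ℝ) : ℝ := Real.sqrt (∑ i, v i ^ 2)

/-- Row sums of `Q = P Zᵀ Θ`, the diagonal entries of `D_P`. -/
def DPvec (g : Fin n → Fin K) (θ : Fin n → ℝ) (P : Matrix (Fin K) (Fin K) ℝ) : Fin K → ℝ :=
  fun k => ∑ j, (P * (Zmat g)ᵀ * Matrix.diagonal θ) k j

/-- `P̃ = D_P^{-1/2} P D_P^{-1/2}`. -/
def Ptilde (g : Fin n → Fin K) (θ : Fin n → ℝ) (P : Matrix (Fin K) (Fin K) ℝ) :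
    Matrix (Fin K) (Fin K) ℝ :=
  Matrix.diagonal (fun k => (Real.sqrt (DPvec g θ P k))⁻¹) * P *
    Matrix.diagonal (fun k => (Real.sqrt (DPvec g θ P k))⁻¹)

/-- `D̃ = diag(‖θ̃^{(k)}‖ / ‖θ̃‖)`. -/
def Dtilde (g : Fin n → Fin K) (θ : Fin n → ℝ) (P : Matrix (Fin K) (Fin K) ℝ) (δ d : ℝ) :
    Matrix (Fin K) (Fin K) ℝ :=
  Matrix.diagonal fun k => normE (thetaTildeK g θ P δ d k) / normE (thetaTilde g θ P δ d)

/-- `Γ̃`, the `n × K` matrix whose `k`-th column is `θ̃^{(k)} / ‖θ̃^{(k)}‖`. -/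
def Gamma (g : Fin n → Fin K) (θ : Fin n → ℝ) (P : Matrix (Fin K) (Fin K) ℝ) (δ d : ℝ) :
    Matrix (Fin n) (Fin K) ℝ :=
  Matrix.of fun i k => thetaTildeK g θ P δ d k i / normE (thetaTildeK g θ P δ d k)

set_option maxHeartbeats 1000000 in
/-- The factorization `𝓛_δ = ‖θ̃‖² · Γ̃ (D̃ P̃ D̃) Γ̃ᵀ`. -/
theorem stmt2 {n K : ℕ} (hK : 1 ≤ K) (hKn : K ≤ n)
    (g : Fin n → Fin K) (hg : Function.Surjective g)
    (θ : Fin n → ℝ) (hθ : ∀ i, 0 < θ i)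
    (P : Matrix (Fin K) (Fin K) ℝ) (hPsymm : P.IsSymm) (hPdet : P.det ≠ 0)
    (hPnn : ∀ k l, 0 ≤ P k l)
    (δ d : ℝ) (hδ : 0 < δ) (hd : 0 < d) :
    Ldelta g θ P δ d =
      (normE (thetaTilde g θ P δ d)) ^ 2 •
        (Gamma g θ P δ d * (Dtilde g θ P δ d * Ptilde g θ P * Dtilde g θ P δ d) *
          (Gamma g θ P δ d)ᵀ) := by
  classical
  have hΩ : ∀ i j, Omega g θ P i j = θ i * P (g i) (g j) * θ j := by
    intro i j
    simp only [Omega, Matrix.mul_diagonal, Matrix.diagonal_mul, Matrix.mul_apply,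
      Matrix.transpose_apply, Zmat, Matrix.of_apply, Matrix.diagonal_apply, ite_mul, mul_ite, mul_zero,
      zero_mul, mul_one, one_mul, Finset.sum_ite_eq, Finset.sum_ite_eq',
      Finset.mem_univ, if_true]
    have key : ∀ (x : Fin K),
        (∑ x_1 : Fin n, if g x_1 = x then if i = x_1 then θ i else 0 else 0)
          = if g i = x then θ i else 0 := by
      intro x
      rw [Finset.sum_eq_single i]
      · simp
      · intro b _ hb
        simp [Ne.symm hb]
      · simp
    simp only [key, ite_mul, zero_mul, Finset.sum_ite_eq, Finset.mem_univ, if_true]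
  have hDPv : ∀ k, DPvec g θ P k = ∑ j, P k (g j) * θ j := by
    intro k
    simp only [DPvec, Matrix.mul_diagonal, Matrix.mul_apply, Matrix.transpose_apply,
      Zmat, Matrix.of_apply, Matrix.diagonal_apply, ite_mul, mul_ite, mul_zero, mul_one, Finset.sum_ite_eq,
      Finset.sum_ite_eq', Finset.mem_univ, if_true]
  have hD : ∀ i, Dvec g θ P i = θ i * DPvec g θ P (g i) := by
    intro i
    simp [Dvec, hΩ, hDPv, Finset.mul_sum, mul_assoc]
  have hc : 0 < δ * d := mul_pos hδ hd
  have hDPpos : ∀ k, 0 < DPvec g θ P k := by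
    intro k
    have hrow : ∃ l, P k l ≠ 0 := by
      by_contra h
      push_neg at h
      exact hPdet (Matrix.det_eq_zero_of_row_eq_zero k h)
    obtain ⟨l, hl⟩ := hrow
    obtain ⟨j0, hj0⟩ := hg l
    rw [hDPv]
    apply Finset.sum_pos'
    · intro j _
      exact mul_nonneg (hPnn _ _) (hθ j).le
    · refine ⟨j0, Finset.mem_univ _, ?_⟩
      rw [hj0]
      exact mul_pos (lt_of_le_of_ne (hPnn k l) (Ne.symm hl)) (hθ j0)
  have hDpos : ∀ i, 0 < Dvec g θ P i := fun i => by
    rw [hD]; exact mul_pos (hθ i) (hDPpos _)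
  have hDd : ∀ i, 0 < Dvec g θ P i + δ * d := fun i => add_pos (hDpos i) hc
  have htdpos : ∀ i, 0 < thetaDelta g θ P δ d i := fun i =>
    div_pos (mul_pos (hθ i) (hDpos i)) (hDd i)
  have httpos : ∀ i, 0 < thetaTilde g θ P δ d i := fun i => Real.sqrt_pos.mpr (htdpos i)
  have hnormk : ∀ k, 0 < normE (thetaTildeK g θ P δ d k) := by
    intro k
    obtain ⟨i0, hi0⟩ := hg k
    apply Real.sqrt_pos.mpr
    apply Finset.sum_pos'
    · intro i _; positivity
    · refine ⟨i0, Finset.mem_univ _, ?_⟩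
      simp only [thetaTildeK, hi0, if_true]
      exact pow_pos (httpos i0) 2
  have hnorm : 0 < normE (thetaTilde g θ P δ d) := by
    apply Real.sqrt_pos.mpr
    apply Finset.sum_pos
    · intro i _; exact pow_pos (httpos i) 2
    · exact ⟨⟨0, lt_of_lt_of_le hK hKn⟩, Finset.mem_univ _⟩
  have htts : ∀ i, thetaTilde g θ P δ d i
      = θ i * Real.sqrt (DPvec g θ P (g i)) * (Real.sqrt (Dvec g θ P i + δ * d))⁻¹ := by
    intro i
    have h1 : thetaDelta g θ P δ d i
        = (θ i) ^ 2 * DPvec g θ P (g i) / (Dvec g θ P i + δ * d) := by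
      simp only [thetaDelta]
      rw [hD]
      ring
    show Real.sqrt (thetaDelta g θ P δ d i) = _
    rw [h1, Real.sqrt_div (mul_nonneg (sq_nonneg _) (hDPpos _).le),
      Real.sqrt_mul (sq_nonneg _), Real.sqrt_sq (hθ i).le, div_eq_mul_inv]
  ext i j
  simp only [Ldelta, Matrix.mul_diagonal, Matrix.diagonal_mul, Matrix.smul_apply,
    Matrix.mul_apply, Matrix.transpose_apply, Gamma, Dtilde, Ptilde, Matrix.of_apply,
    Matrix.diagonal_apply, one_div, thetaTildeK, hΩ, smul_eq_mul, div_eq_mul_inv, ite_mul, mul_ite, zero_mul, mul_zero,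
    Finset.sum_ite_eq, Finset.sum_ite_eq', Finset.mem_univ, if_true]
  rw [htts i, htts j]
  have e1 : Real.sqrt (DPvec g θ P (g i)) ≠ 0 := (Real.sqrt_pos.mpr (hDPpos _)).ne'
  have e2 : Real.sqrt (DPvec g θ P (g j)) ≠ 0 := (Real.sqrt_pos.mpr (hDPpos _)).ne'
  have e3 : Real.sqrt (Dvec g θ P i + δ * d) ≠ 0 := (Real.sqrt_pos.mpr (hDd i)).ne'
  have e4 : Real.sqrt (Dvec g θ P j + δ * d) ≠ 0 := (Real.sqrt_pos.mpr (hDd j)).ne'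
  have e5 : normE (thetaTildeK g θ P δ d (g i)) ≠ 0 := (hnormk _).ne'
  have e6 : normE (thetaTildeK g θ P δ d (g j)) ≠ 0 := (hnormk _).ne'
  have e7 : normE (thetaTilde g θ P δ d) ≠ 0 := hnorm.ne'
  field_simp

end DCSBM
end
end

section
/- Under the DCSBM population setup, the regularized population Laplacian 𝓛_δ has rank exactly K. -/
open Matrix BigOperators MeasureTheory ProbabilityTheory

noncomputable section

namespace DCSBM

variable {n K : ℕ}

lemma omega_apply (g : Fin n → Fin K) (θ : Fin n → ℝ) (P : Matrix (Fin K) (Fin K) ℝ)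
    (i j : Fin n) : Omega g θ P i j = θ i * P (g i) (g j) * θ j := by
  have hZ : ∀ i j : Fin n, (Zmat g * P * (Zmat g)ᵀ) i j = P (g i) (g j) := by
    intro i j
    simp [Matrix.mul_apply, Zmat, ite_mul, mul_ite, Finset.sum_ite_eq]
  have : Omega g θ P = Matrix.diagonal θ * (Zmat g * P * (Zmat g)ᵀ) * Matrix.diagonal θ := by
    simp only [Omega, Matrix.mul_assoc]
  rw [this, Matrix.mul_diagonal, Matrix.diagonal_mul, hZ]

/-- The regularized population Laplacian `𝓛_δ` has rank exactly `K`. -/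
theorem stmt3 {n K : ℕ} (hK : 1 ≤ K) (hKn : K ≤ n)
    (g : Fin n → Fin K) (hg : Function.Surjective g)
    (θ : Fin n → ℝ) (hθ : ∀ i, 0 < θ i)
    (P : Matrix (Fin K) (Fin K) ℝ) (hPsymm : P.IsSymm) (hPdet : P.det ≠ 0)
    (hPnn : ∀ k l, 0 ≤ P k l)
    (δ d : ℝ) (hδ : 0 < δ) (hd : 0 < d) :
    (Ldelta g θ P δ d).rank = K := by
  classical
  set M : Matrix (Fin n) (Fin K) ℝ := Matrix.diagonal θ * Zmat g with hM
  have hΩ : Omega g θ P = M * P * Mᵀ := by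
    simp only [Omega, hM, Matrix.transpose_mul, Matrix.diagonal_transpose, Matrix.mul_assoc]
  have hδd : 0 < δ * d := mul_pos hδ hd
  have hDpos : ∀ i, 0 < Dvec g θ P i + δ * d := by
    intro i
    have h1 : 0 ≤ Dvec g θ P i := by
      refine Finset.sum_nonneg fun j _ => ?_
      rw [omega_apply]
      exact mul_nonneg (mul_nonneg (hθ i).le (hPnn _ _)) (hθ j).le
    linarith
  have hEdet : IsUnit (Matrix.diagonal
      (fun i => (Real.sqrt (Dvec g θ P i + δ * d))⁻¹)).det := by
    rw [Matrix.det_diagonal]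
    refine isUnit_iff_ne_zero.mpr (Finset.prod_ne_zero_iff.mpr fun i _ => ?_)
    exact inv_ne_zero (ne_of_gt (Real.sqrt_pos.mpr (hDpos i)))
  have hL : (Ldelta g θ P δ d).rank = (Omega g θ P).rank := by
    rw [Ldelta, Matrix.rank_mul_eq_left_of_isUnit_det _ _ hEdet,
        Matrix.rank_mul_eq_right_of_isUnit_det _ _ hEdet]
  -- `MᵀM` is a positive diagonal matrix
  have hMapp : ∀ (i : Fin n) (k : Fin K), M i k = if g i = k then θ i else 0 := by
    intro i k
    rw [hM, Matrix.diagonal_mul]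
    simp [Zmat]
  have hMtM : Mᵀ * M = Matrix.diagonal (fun k => ∑ i, if g i = k then θ i ^ 2 else 0) := by
    ext k l
    rw [Matrix.mul_apply]
    simp only [Matrix.transpose_apply, hMapp]
    by_cases hkl : k = l
    · subst hkl
      rw [Matrix.diagonal_apply_eq]
      refine Finset.sum_congr rfl fun i _ => ?_
      by_cases h : g i = k <;> simp [h, sq]
    · rw [Matrix.diagonal_apply_ne _ hkl]
      refine Finset.sum_eq_zero fun i _ => ?_
      by_cases h : g i = k <;> simp [h, hkl]
  have hwpos : ∀ k, (0:ℝ) < ∑ i, if g i = k then θ i ^ 2 else 0 := by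
    intro k
    obtain ⟨i, hi⟩ := hg k
    refine Finset.sum_pos' (fun j _ => by by_cases h : g j = k <;> simp [h, sq_nonneg])
      ⟨i, Finset.mem_univ i, ?_⟩
    simp only [hi, if_pos rfl]
    exact pow_pos (hθ i) 2
  have hMtMdet : (Mᵀ * M).det ≠ 0 := by
    rw [hMtM, Matrix.det_diagonal]
    exact Finset.prod_ne_zero_iff.mpr fun k _ => (hwpos k).ne'
  -- upper bound
  have hub : (Omega g θ P).rank ≤ K := by
    rw [hΩ]
    calc (M * P * Mᵀ).rank ≤ Mᵀ.rank := Matrix.rank_mul_le_right _ _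
      _ ≤ Fintype.card (Fin K) := Matrix.rank_le_card_height _
      _ = K := Fintype.card_fin K
  -- lower bound
  have hlb : K ≤ (Omega g θ P).rank := by
    have hmid : Mᵀ * Omega g θ P * M = (Mᵀ * M) * P * (Mᵀ * M) := by
      rw [hΩ]; simp only [Matrix.mul_assoc]
    have hdet : IsUnit ((Mᵀ * M) * P * (Mᵀ * M)).det := by
      rw [Matrix.det_mul, Matrix.det_mul]
      exact isUnit_iff_ne_zero.mpr (mul_ne_zero (mul_ne_zero hMtMdet hPdet) hMtMdet)
    have h1 : (Mᵀ * Omega g θ P * M).rank = K := by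
      rw [hmid, Matrix.rank_of_isUnit _ ((Matrix.isUnit_iff_isUnit_det _).mpr hdet),
        Fintype.card_fin]
    calc K = (Mᵀ * Omega g θ P * M).rank := h1.symm
      _ ≤ (Mᵀ * Omega g θ P).rank := Matrix.rank_mul_le_left _ _
      _ ≤ (Omega g θ P).rank := Matrix.rank_mul_le_right _ _
  rw [hL]
  exact le_antisymm hub hlb

end DCSBM
end
end

section
/- Under the DCSBM population setup, if a ∈ ℝ^K is a unit-norm eigenvector of D̃P̃D̃ with eigenvalue μ, then the vector η = Γ̃a = Σ_{k=1}^K (a(k)/‖θ̃^{(k)}‖)·θ̃^{(k)} ∈ ℝ^n has unit norm and is an eigenvector of 𝓛_δ with eigenvalue ‖θ̃‖²μ, i.e., 𝓛_δ η = ‖θ̃‖²μ · η and ‖η‖ = 1. -/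
open Matrix BigOperators MeasureTheory ProbabilityTheory

noncomputable section

namespace DCSBM

variable {n K : ℕ}

variable (g : Fin n → Fin K) (θ : Fin n → ℝ) (P : Matrix (Fin K) (Fin K) ℝ) (δ d : ℝ)

lemma Omega_apply (i j : Fin n) : Omega g θ P i j = θ i * θ j * P (g i) (g j) := by
  simp only [Omega, Matrix.mul_apply, Zmat, Matrix.diagonal_apply, Matrix.of_apply,
    Matrix.transpose_apply, ite_mul, mul_ite, one_mul, mul_one, zero_mul, mul_zero,
    Finset.sum_ite_eq', Finset.sum_ite_eq, Finset.mem_univ, if_true]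
  have key : ∀ x : Fin K, ∀ x1 : Fin n,
      (if g x1 = x then if i = x1 then θ i else 0 else 0)
        = (if i = x1 then if g x1 = x then θ i else 0 else 0) := by
    intro x x1; split_ifs <;> rfl
  simp only [key, Finset.sum_ite_eq, Finset.mem_univ, if_true, Finset.sum_ite_eq',
    ite_mul, zero_mul]
  ring

lemma DPvec_eq (k : Fin K) : DPvec g θ P k = ∑ j, P k (g j) * θ j := by
  simp [DPvec, Matrix.mul_apply, Zmat, Matrix.diagonal_apply, Finset.sum_ite_eq',
    ite_mul, mul_ite]

lemma Dvec_eq (i : Fin n) : Dvec g θ P i = θ i * DPvec g θ P (g i) := by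
  simp only [Dvec, Omega_apply, DPvec_eq, Finset.mul_sum]
  exact Finset.sum_congr rfl fun j _ => by ring

lemma normE_sq {m : ℕ} (v : Fin m → ℝ) : normE v ^ 2 = ∑ i, v i ^ 2 :=
  Real.sq_sqrt (by positivity)

lemma normE_pos {m : ℕ} (v : Fin m → ℝ) (i : Fin m) (hv : v i ≠ 0) : 0 < normE v := by
  apply Real.sqrt_pos.mpr
  apply Finset.sum_pos' (fun j _ => sq_nonneg _) ⟨i, Finset.mem_univ _, by positivity⟩

lemma DPvec_pos (hg : Function.Surjective g) (hθ : ∀ i, 0 < θ i)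
    (hPdet : P.det ≠ 0) (hPnn : ∀ k l, 0 ≤ P k l) (k : Fin K) :
    0 < DPvec g θ P k := by
  obtain ⟨l, hl⟩ : ∃ l, P k l ≠ 0 := by
    by_contra h
    push_neg at h
    exact hPdet (Matrix.det_eq_zero_of_row_eq_zero k h)
  obtain ⟨j0, hj0⟩ := hg l
  rw [DPvec_eq]
  refine Finset.sum_pos' (fun j _ => mul_nonneg (hPnn _ _) (hθ j).le)
    ⟨j0, Finset.mem_univ _, mul_pos ?_ (hθ j0)⟩
  rw [hj0]
  exact (hPnn k l).lt_of_ne (Ne.symm hl)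

lemma Dvec_pos (hg : Function.Surjective g) (hθ : ∀ i, 0 < θ i)
    (hPdet : P.det ≠ 0) (hPnn : ∀ k l, 0 ≤ P k l) (i : Fin n) :
    0 < Dvec g θ P i := by
  rw [Dvec_eq]
  exact mul_pos (hθ i) (DPvec_pos g θ P hg hθ hPdet hPnn (g i))

lemma thetaTilde_pos (hg : Function.Surjective g) (hθ : ∀ i, 0 < θ i)
    (hPdet : P.det ≠ 0) (hPnn : ∀ k l, 0 ≤ P k l) (hδ : 0 < δ) (hd : 0 < d) (i : Fin n) :
    0 < thetaTilde g θ P δ d i := by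
  have hD := Dvec_pos g θ P hg hθ hPdet hPnn i
  apply Real.sqrt_pos.mpr
  have : 0 < Dvec g θ P i + δ * d := by positivity
  exact div_pos (mul_pos (hθ i) hD) this

lemma tt_rel (hg : Function.Surjective g) (hθ : ∀ i, 0 < θ i)
    (hPdet : P.det ≠ 0) (hPnn : ∀ k l, 0 ≤ P k l) (hδ : 0 < δ) (hd : 0 < d) (i : Fin n) :
    θ i * (Real.sqrt (Dvec g θ P i + δ * d))⁻¹
      = thetaTilde g θ P δ d i * (Real.sqrt (DPvec g θ P (g i)))⁻¹ := by
  have hs := DPvec_pos g θ P hg hθ hPdet hPnn (g i)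
  have hD := Dvec_pos g θ P hg hθ hPdet hPnn i
  have hE : 0 < Dvec g θ P i + δ * d := by positivity
  have ht : thetaTilde g θ P δ d i
      = θ i * Real.sqrt (DPvec g θ P (g i)) / Real.sqrt (Dvec g θ P i + δ * d) := by
    simp only [thetaTilde, thetaDelta]
    rw [show θ i * Dvec g θ P i = θ i ^ 2 * DPvec g θ P (g i) by
          rw [Dvec_eq]; ring,
        Real.sqrt_div (by positivity), Real.sqrt_mul (sq_nonneg _),
        Real.sqrt_sq (hθ i).le]
  rw [ht]
  have h1 : Real.sqrt (DPvec g θ P (g i)) ≠ 0 := by positivity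
  have h2 : Real.sqrt (Dvec g θ P i + δ * d) ≠ 0 := by positivity
  field_simp

lemma sum_fiber (f : Fin K → ℝ) :
    ∑ j, f (g j) * (thetaTilde g θ P δ d j) ^ 2
      = ∑ l, f l * (normE (thetaTildeK g θ P δ d l)) ^ 2 := by
  simp only [normE_sq, thetaTildeK, Finset.mul_sum]
  rw [Finset.sum_comm]
  refine Finset.sum_congr rfl fun j _ => ?_
  simp [ite_pow, mul_ite, Finset.sum_ite_eq']

lemma DPD_apply (δ d : ℝ) (k l : Fin K) :
    (Dtilde g θ P δ d * Ptilde g θ P * Dtilde g θ P δ d) k l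
      = (normE (thetaTildeK g θ P δ d k) / normE (thetaTilde g θ P δ d))
          * ((Real.sqrt (DPvec g θ P k))⁻¹ * P k l * (Real.sqrt (DPvec g θ P l))⁻¹)
          * (normE (thetaTildeK g θ P δ d l) / normE (thetaTilde g θ P δ d)) := by
  simp [Dtilde, Ptilde, Matrix.mul_diagonal, Matrix.diagonal_mul]


/-- If `a` is a unit-norm eigenvector of `D̃P̃D̃` with eigenvalue `μ`, then
`η = Γ̃ a = ∑_k (a k / ‖θ̃^{(k)}‖) • θ̃^{(k)}` is a unit-norm eigenvector of `𝓛_δ`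
with eigenvalue `‖θ̃‖² μ`. -/
theorem stmt4 {n K : ℕ} (hK : 1 ≤ K) (hKn : K ≤ n)
    (g : Fin n → Fin K) (hg : Function.Surjective g)
    (θ : Fin n → ℝ) (hθ : ∀ i, 0 < θ i)
    (P : Matrix (Fin K) (Fin K) ℝ) (hPsymm : P.IsSymm) (hPdet : P.det ≠ 0)
    (hPnn : ∀ k l, 0 ≤ P k l)
    (δ d : ℝ) (hδ : 0 < δ) (hd : 0 < d)
    (a : Fin K → ℝ) (μ : ℝ) (ha : normE a = 1)
    (heig : (Dtilde g θ P δ d * Ptilde g θ P * Dtilde g θ P δ d) *ᵥ a = μ • a) :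
    (Gamma g θ P δ d) *ᵥ a =
        (∑ k, (a k / normE (thetaTildeK g θ P δ d k)) • thetaTildeK g θ P δ d k) ∧
      Ldelta g θ P δ d *ᵥ ((Gamma g θ P δ d) *ᵥ a) =
        ((normE (thetaTilde g θ P δ d)) ^ 2 * μ) • ((Gamma g θ P δ d) *ᵥ a) ∧
      normE ((Gamma g θ P δ d) *ᵥ a) = 1 := by
  have expand : ∀ {m p : ℕ} (M : Matrix (Fin m) (Fin p) ℝ) (v : Fin p → ℝ) (i : Fin m),
      (M *ᵥ v) i = ∑ j, M i j * v j := fun _ _ _ => rfl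
  have hspos : ∀ k, 0 < DPvec g θ P k := DPvec_pos g θ P hg hθ hPdet hPnn
  have htpos : ∀ i, 0 < thetaTilde g θ P δ d i :=
    thetaTilde_pos g θ P δ d hg hθ hPdet hPnn hδ hd
  have hNpos : ∀ k, 0 < normE (thetaTildeK g θ P δ d k) := by
    intro k
    obtain ⟨i0, hi0⟩ := hg k
    refine normE_pos _ i0 ?_
    simp only [thetaTildeK, hi0, if_true]
    exact (htpos i0).ne'
  have hTpos : 0 < normE (thetaTilde g θ P δ d) := by
    obtain ⟨i0, _⟩ := hg ⟨0, hK⟩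
    exact normE_pos _ i0 (htpos i0).ne'
  have heta : ∀ i, ((Gamma g θ P δ d) *ᵥ a) i
      = thetaTilde g θ P δ d i * a (g i) / normE (thetaTildeK g θ P δ d (g i)) := by
    intro i
    rw [expand]
    simp only [Gamma, Matrix.of_apply, thetaTildeK, div_eq_mul_inv, ite_mul, zero_mul,
      Finset.sum_ite_eq, Finset.sum_ite_eq', Finset.mem_univ, if_true]
    ring
  have hkey : ∀ k, ∑ l, (Real.sqrt (DPvec g θ P k))⁻¹ * P k l
        * (Real.sqrt (DPvec g θ P l))⁻¹ * normE (thetaTildeK g θ P δ d l) * a l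
      = normE (thetaTilde g θ P δ d) ^ 2 * μ * a k / normE (thetaTildeK g θ P δ d k) := by
    intro k
    have h1 := congrFun heig k
    rw [expand] at h1
    simp only [Pi.smul_apply, smul_eq_mul] at h1
    rw [show (∑ l, (Dtilde g θ P δ d * Ptilde g θ P * Dtilde g θ P δ d) k l * a l)
        = ∑ l, (normE (thetaTildeK g θ P δ d k) / normE (thetaTilde g θ P δ d))
            * ((Real.sqrt (DPvec g θ P k))⁻¹ * P k l * (Real.sqrt (DPvec g θ P l))⁻¹)
            * (normE (thetaTildeK g θ P δ d l) / normE (thetaTilde g θ P δ d)) * a l from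
      Finset.sum_congr rfl fun l _ => by rw [DPD_apply]] at h1
    have hNk := (hNpos k).ne'
    have hT := hTpos.ne'
    calc ∑ l, (Real.sqrt (DPvec g θ P k))⁻¹ * P k l * (Real.sqrt (DPvec g θ P l))⁻¹
            * normE (thetaTildeK g θ P δ d l) * a l
        = ∑ l, (normE (thetaTilde g θ P δ d) ^ 2 / normE (thetaTildeK g θ P δ d k))
            * ((normE (thetaTildeK g θ P δ d k) / normE (thetaTilde g θ P δ d))
              * ((Real.sqrt (DPvec g θ P k))⁻¹ * P k l * (Real.sqrt (DPvec g θ P l))⁻¹)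
              * (normE (thetaTildeK g θ P δ d l) / normE (thetaTilde g θ P δ d)) * a l) := by
          refine Finset.sum_congr rfl fun l _ => ?_
          have hc : normE (thetaTilde g θ P δ d) ^ 2 / normE (thetaTildeK g θ P δ d k)
              * (normE (thetaTildeK g θ P δ d k) / normE (thetaTilde g θ P δ d))
              * (normE (thetaTildeK g θ P δ d l) / normE (thetaTilde g θ P δ d))
              = normE (thetaTildeK g θ P δ d l) := by
            field_simp
          calc (Real.sqrt (DPvec g θ P k))⁻¹ * P k l * (Real.sqrt (DPvec g θ P l))⁻¹
                * normE (thetaTildeK g θ P δ d l) * a l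
              = (normE (thetaTilde g θ P δ d) ^ 2 / normE (thetaTildeK g θ P δ d k)
                  * (normE (thetaTildeK g θ P δ d k) / normE (thetaTilde g θ P δ d))
                  * (normE (thetaTildeK g θ P δ d l) / normE (thetaTilde g θ P δ d)))
                * ((Real.sqrt (DPvec g θ P k))⁻¹ * P k l * (Real.sqrt (DPvec g θ P l))⁻¹)
                * a l := by rw [hc]; ring
            _ = _ := by ring
      _ = (normE (thetaTilde g θ P δ d) ^ 2 / normE (thetaTildeK g θ P δ d k))
            * ∑ l, (normE (thetaTildeK g θ P δ d k) / normE (thetaTilde g θ P δ d))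
              * ((Real.sqrt (DPvec g θ P k))⁻¹ * P k l * (Real.sqrt (DPvec g θ P l))⁻¹)
              * (normE (thetaTildeK g θ P δ d l) / normE (thetaTilde g θ P δ d)) * a l := by
          rw [Finset.mul_sum]
      _ = (normE (thetaTilde g θ P δ d) ^ 2 / normE (thetaTildeK g θ P δ d k)) * (μ * a k) := by
          rw [h1]
      _ = normE (thetaTilde g θ P δ d) ^ 2 * μ * a k / normE (thetaTildeK g θ P δ d k) := by
          ring
  refine ⟨?_, ?_, ?_⟩
  · funext i
    rw [heta i]
    simp only [Finset.sum_apply, Pi.smul_apply, smul_eq_mul, thetaTildeK,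
      mul_ite, mul_zero, Finset.sum_ite_eq, Finset.sum_ite_eq', Finset.mem_univ, if_true]
    ring
  · funext i
    have hrel : ∀ j, θ j * (Real.sqrt (Dvec g θ P j + δ * d))⁻¹
        = thetaTilde g θ P δ d j * (Real.sqrt (DPvec g θ P (g j)))⁻¹ :=
      fun j => tt_rel g θ P δ d hg hθ hPdet hPnn hδ hd j
    have hL : ∀ j, Ldelta g θ P δ d i j
        = (Real.sqrt (Dvec g θ P i + δ * d))⁻¹ * (θ i * θ j * P (g i) (g j))
          * (Real.sqrt (Dvec g θ P j + δ * d))⁻¹ := by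
      intro j
      simp only [Ldelta, Matrix.mul_diagonal, Matrix.diagonal_mul, Omega_apply]
    have step1 : (Ldelta g θ P δ d *ᵥ ((Gamma g θ P δ d) *ᵥ a)) i
        = ∑ j, (fun l => thetaTilde g θ P δ d i * (Real.sqrt (DPvec g θ P (g i)))⁻¹
            * P (g i) l * (Real.sqrt (DPvec g θ P l))⁻¹
            * (a l / normE (thetaTildeK g θ P δ d l))) (g j)
            * thetaTilde g θ P δ d j ^ 2 := by
      rw [expand]
      refine Finset.sum_congr rfl fun j _ => ?_
      rw [hL j, heta j]
      calc (Real.sqrt (Dvec g θ P i + δ * d))⁻¹ * (θ i * θ j * P (g i) (g j))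
            * (Real.sqrt (Dvec g θ P j + δ * d))⁻¹
            * (thetaTilde g θ P δ d j * a (g j) / normE (thetaTildeK g θ P δ d (g j)))
          = (θ i * (Real.sqrt (Dvec g θ P i + δ * d))⁻¹)
            * ((θ j * (Real.sqrt (Dvec g θ P j + δ * d))⁻¹) * (P (g i) (g j)
              * (thetaTilde g θ P δ d j * a (g j) / normE (thetaTildeK g θ P δ d (g j))))) := by
            ring
        _ = (thetaTilde g θ P δ d i * (Real.sqrt (DPvec g θ P (g i)))⁻¹)
            * ((thetaTilde g θ P δ d j * (Real.sqrt (DPvec g θ P (g j)))⁻¹) * (P (g i) (g j)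
              * (thetaTilde g θ P δ d j * a (g j) / normE (thetaTildeK g θ P δ d (g j))))) := by
            rw [hrel i, hrel j]
        _ = _ := by ring
    rw [step1, sum_fiber g θ P δ d (fun l => thetaTilde g θ P δ d i
      * (Real.sqrt (DPvec g θ P (g i)))⁻¹ * P (g i) l * (Real.sqrt (DPvec g θ P l))⁻¹
      * (a l / normE (thetaTildeK g θ P δ d l)))]
    have step2 : ∑ l, (thetaTilde g θ P δ d i * (Real.sqrt (DPvec g θ P (g i)))⁻¹
          * P (g i) l * (Real.sqrt (DPvec g θ P l))⁻¹
          * (a l / normE (thetaTildeK g θ P δ d l))) * normE (thetaTildeK g θ P δ d l) ^ 2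
        = thetaTilde g θ P δ d i * ∑ l, (Real.sqrt (DPvec g θ P (g i)))⁻¹ * P (g i) l
            * (Real.sqrt (DPvec g θ P l))⁻¹ * normE (thetaTildeK g θ P δ d l) * a l := by
      rw [Finset.mul_sum]
      refine Finset.sum_congr rfl fun l _ => ?_
      have hNl := (hNpos l).ne'
      have hx : a l / normE (thetaTildeK g θ P δ d l)
          * normE (thetaTildeK g θ P δ d l) ^ 2
          = normE (thetaTildeK g θ P δ d l) * a l := by
        rw [sq]; field_simp
      calc thetaTilde g θ P δ d i * (Real.sqrt (DPvec g θ P (g i)))⁻¹ * P (g i) l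
            * (Real.sqrt (DPvec g θ P l))⁻¹ * (a l / normE (thetaTildeK g θ P δ d l))
            * normE (thetaTildeK g θ P δ d l) ^ 2
          = thetaTilde g θ P δ d i * (Real.sqrt (DPvec g θ P (g i)))⁻¹ * P (g i) l
            * (Real.sqrt (DPvec g θ P l))⁻¹
            * (a l / normE (thetaTildeK g θ P δ d l)
                * normE (thetaTildeK g θ P δ d l) ^ 2) := by ring
        _ = thetaTilde g θ P δ d i * (Real.sqrt (DPvec g θ P (g i)))⁻¹ * P (g i) l
            * (Real.sqrt (DPvec g θ P l))⁻¹
            * (normE (thetaTildeK g θ P δ d l) * a l) := by rw [hx]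
        _ = _ := by ring
    rw [step2, hkey (g i), Pi.smul_apply, smul_eq_mul, heta i]
    ring
  · have hsum : ∑ i, (((Gamma g θ P δ d) *ᵥ a) i) ^ 2 = 1 := by
      have h2 : ∀ i, (((Gamma g θ P δ d) *ᵥ a) i) ^ 2
          = (fun l => (a l / normE (thetaTildeK g θ P δ d l)) ^ 2) (g i)
            * thetaTilde g θ P δ d i ^ 2 := by
        intro i; rw [heta i]; ring
      rw [Finset.sum_congr rfl fun i _ => h2 i,
        sum_fiber g θ P δ d (fun l => (a l / normE (thetaTildeK g θ P δ d l)) ^ 2)]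
      have h3 : ∀ l, (a l / normE (thetaTildeK g θ P δ d l)) ^ 2
          * normE (thetaTildeK g θ P δ d l) ^ 2 = a l ^ 2 := by
        intro l
        have hNl := (hNpos l).ne'
        field_simp
      rw [Finset.sum_congr rfl fun l _ => h3 l]
      have h4 := normE_sq a
      rw [ha] at h4
      simpa using h4.symm
    rw [normE, hsum, Real.sqrt_one]

end DCSBM
end
end
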